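/- arXiv:2206.00846 — 7 statements merged into one kernel-verified Lean document; each statement's English description precedes it below -/
import Mathlib

section
/- Let d ∈ ℕ, G ≥ 0 and R > 0. Let f : ℝ^d → ℝ be differentiable and convex, and let w₀ ∈ ℝ^d. Suppose that for every v ∈ ℝ^d with ‖v − w₀‖ = R one has ⟨∇f(v), v − w₀⟩ ≥ G. Then for every w ∈ ℝ^d with ‖w − w₀‖ > R, one has ‖∇f(w)‖ ≥ G/R. -/
open RealInnerProductSpace

lemma aux_grad_mono {E : Type*} [NormedAddCommGroup E] [InnerProductSpace ℝ E] [CompleteSpace E]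
    (f : E → ℝ) (hdiff : Differentiable ℝ f) (hconv : ConvexOn ℝ Set.univ f)
    (x y : E) : ⟪gradient f x, y - x⟫ ≤ ⟪gradient f y, y - x⟫ := by
  rcases eq_or_ne x y with rfl | hxy
  · simp
  set c : ℝ → E := fun t => t • (y - x) + x with hc
  have hcderiv : ∀ t : ℝ, HasDerivAt c (y - x) t := fun t => by
    simpa [hc] using ((hasDerivAt_id t).smul_const (y - x)).add_const x
  have hgconv : ConvexOn ℝ Set.univ (f ∘ c) := by
    have h := hconv.comp_affineMap (AffineMap.lineMap x y : ℝ →ᵃ[ℝ] E)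
    have heq : (f ∘ ⇑(AffineMap.lineMap x y : ℝ →ᵃ[ℝ] E)) = f ∘ c := by
      funext t
      simp [hc, AffineMap.lineMap_apply, Function.comp]
    rw [heq] at h
    simpa using h
  have hgd : ∀ t : ℝ, HasDerivAt (f ∘ c) ⟪gradient f (c t), y - x⟫ t := by
    intro t
    have hF : HasFDerivAt f ((InnerProductSpace.toDual ℝ E) (gradient f (c t))) (c t) :=
      hasGradientAt_iff_hasFDerivAt.mp (hdiff (c t)).hasGradientAt
    have h := hF.comp_hasDerivAt t (hcderiv t)
    simpa [InnerProductSpace.toDual_apply_apply] using h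
  have h0 : ⟪gradient f (c 0), y - x⟫ ≤ slope (f ∘ c) 0 1 :=
    hgconv.le_slope_of_hasDerivAt (Set.mem_univ 0) (Set.mem_univ 1) zero_lt_one (hgd 0)
  have h1 : slope (f ∘ c) 0 1 ≤ ⟪gradient f (c 1), y - x⟫ :=
    hgconv.slope_le_of_hasDerivAt (Set.mem_univ 0) (Set.mem_univ 1) zero_lt_one (hgd 1)
  have hc0 : c 0 = x := by simp [hc]
  have hc1 : c 1 = y := by simp [hc]
  rw [hc0] at h0; rw [hc1] at h1
  linarith

/-- If a differentiable convex function `f` has `⟪∇f(v), v - w₀⟫ ≥ G` on the sphere of radius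
`R` around `w₀`, then `‖∇f(w)‖ ≥ G / R` for every `w` outside the corresponding ball. -/
theorem stmt_0 (d : ℕ) (G R : ℝ) (hG : 0 ≤ G) (hR : 0 < R)
    (f : EuclideanSpace ℝ (Fin d) → ℝ)
    (hdiff : Differentiable ℝ f)
    (hconv : ConvexOn ℝ Set.univ f)
    (w₀ : EuclideanSpace ℝ (Fin d))
    (hsphere : ∀ v : EuclideanSpace ℝ (Fin d), ‖v - w₀‖ = R → G ≤ ⟪gradient f v, v - w₀⟫) :
    ∀ w : EuclideanSpace ℝ (Fin d), R < ‖w - w₀‖ → G / R ≤ ‖gradient f w‖ := by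
  intro w hw
  set n : ℝ := ‖w - w₀‖ with hn
  have hn0 : 0 < n := lt_trans hR hw
  set v : EuclideanSpace ℝ (Fin d) := w₀ + (R / n) • (w - w₀) with hv
  have hvsub : v - w₀ = (R / n) • (w - w₀) := by simp [hv]
  have hvR : ‖v - w₀‖ = R := by
    rw [hvsub, norm_smul]
    simp only [Real.norm_eq_abs]
    rw [abs_of_pos (div_pos hR hn0), ← hn]
    field_simp
  have hwv : w - v = (1 - R / n) • (w - w₀) := by
    rw [hv]; rw [sub_smul, one_smul]; abel
  -- gradient monotonicity
  have hmono := aux_grad_mono f hdiff hconv v w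
  rw [hwv] at hmono
  have hcoef : 0 < 1 - R / n := by
    have : R / n < 1 := (div_lt_one hn0).mpr hw
    linarith
  have hmono' : ⟪gradient f v, w - w₀⟫ ≤ ⟪gradient f w, w - w₀⟫ := by
    rw [real_inner_smul_right, real_inner_smul_right] at hmono
    exact le_of_mul_le_mul_left (by linarith [hmono]) hcoef
  -- sphere bound
  have hsph := hsphere v hvR
  rw [hvsub, real_inner_smul_right] at hsph
  have hGn : G * (n / R) ≤ ⟪gradient f v, w - w₀⟫ := by
    have h1 : G / (R / n) ≤ ⟪gradient f v, w - w₀⟫ := by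
      rw [div_le_iff₀ (div_pos hR hn0)]
      linarith [hsph]
    calc G * (n / R) = G / (R / n) := by field_simp
    _ ≤ _ := h1
  -- Cauchy-Schwarz
  have hcs : ⟪gradient f w, w - w₀⟫ ≤ ‖gradient f w‖ * n := by
    simpa [← hn] using real_inner_le_norm (gradient f w) (w - w₀)
  have hfin : G * (n / R) ≤ ‖gradient f w‖ * n := le_trans hGn (le_trans hmono' hcs)
  have hfin' : (G / R) * n ≤ ‖gradient f w‖ * n := by
    calc (G / R) * n = G * (n / R) := by ring
    _ ≤ _ := hfin
  exact le_of_mul_le_mul_right hfin' hn0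
end

section
/- Let F : ℝ^d → ℝ be differentiable with L₁-Lipschitz gradient, where L₁ > 0. Let w, g ∈ ℝ^d and α, α̃, c > 0 satisfy: ‖g − ∇F(w)‖² ≤ α·α̃, α ≤ α̃, c ≤ α̃, and ‖g‖ > 2·α̃. Then with step size η = c/(L₁·‖g‖), one has F(w − η·g) ≤ F(w) − c·α̃/(4·L₁). -/
open InnerProductSpace intervalIntegral

lemma descent_aux {E : Type*} [NormedAddCommGroup E] [InnerProductSpace ℝ E]
    [CompleteSpace E] (F : E → ℝ) (hdiff : Differentiable ℝ F) (L : NNReal)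
    (hlip : LipschitzWith L (gradient F)) (x v : E) :
    F (x + v) ≤ F x + ⟪gradient F x, v⟫_ℝ + (L : ℝ) / 2 * ‖v‖ ^ 2 := by
  have hline : ∀ t : ℝ, HasDerivAt (fun t : ℝ => x + t • v) v t := fun t =>
    by simpa using ((hasDerivAt_id t).smul_const v).const_add x
  have hφ : ∀ t : ℝ, HasDerivAt (fun t : ℝ => F (x + t • v))
      ⟪gradient F (x + t • v), v⟫_ℝ t := by
    intro t
    have h1 := ((hdiff (x + t • v)).hasGradientAt.hasFDerivAt).comp_hasDerivAt t (hline t)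
    simpa [toDual_apply_apply, Function.comp_def] using h1
  have hcontg : Continuous fun t : ℝ => ⟪gradient F (x + t • v), v⟫_ℝ := by
    exact (Continuous.inner (hlip.continuous.comp (by continuity)) continuous_const)
  have hint : F (x + v) - F x = ∫ t in (0:ℝ)..1, ⟪gradient F (x + t • v), v⟫_ℝ := by
    have := intervalIntegral.integral_eq_sub_of_hasDerivAt
      (f := fun t : ℝ => F (x + t • v)) (fun t _ => hφ t)
      (hcontg.intervalIntegrable 0 1)
    simpa using this.symm
  have hbound : ∀ t ∈ Set.Icc (0:ℝ) 1,
      ⟪gradient F (x + t • v), v⟫_ℝ ≤ ⟪gradient F x, v⟫_ℝ + (L : ℝ) * t * ‖v‖ ^ 2 := by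
    intro t ht
    have h1 : ⟪gradient F (x + t • v) - gradient F x, v⟫_ℝ
        ≤ ‖gradient F (x + t • v) - gradient F x‖ * ‖v‖ := real_inner_le_norm _ _
    have h2 : ‖gradient F (x + t • v) - gradient F x‖ ≤ (L : ℝ) * (t * ‖v‖) := by
      have := hlip.norm_sub_le (x + t • v) x
      simpa [norm_smul, abs_of_nonneg ht.1] using this
    have h3 := inner_sub_left (𝕜 := ℝ) (gradient F (x + t • v)) (gradient F x) v
    nlinarith [norm_nonneg v, norm_nonneg (gradient F (x + t • v) - gradient F x)]
  have hmono : (∫ t in (0:ℝ)..1, ⟪gradient F (x + t • v), v⟫_ℝ)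
      ≤ ∫ t in (0:ℝ)..1, (⟪gradient F x, v⟫_ℝ + (L : ℝ) * t * ‖v‖ ^ 2) := by
    apply intervalIntegral.integral_mono_on (by norm_num)
      (hcontg.intervalIntegrable 0 1)
      ((by continuity : Continuous fun t : ℝ => ⟪gradient F x, v⟫_ℝ + (L : ℝ) * t * ‖v‖ ^ 2).intervalIntegrable 0 1)
      hbound
  have hval : (∫ t in (0:ℝ)..1, (⟪gradient F x, v⟫_ℝ + (L : ℝ) * t * ‖v‖ ^ 2))
      = ⟪gradient F x, v⟫_ℝ + (L : ℝ) / 2 * ‖v‖ ^ 2 := by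
    rw [intervalIntegral.integral_add (intervalIntegrable_const)
      (((intervalIntegrable_id).const_mul _).mul_const _ )]
    simp [integral_id, mul_comm, mul_assoc]
    ring
  linarith [hint, hmono, hval.le, hval.ge]

/-- SPIDER-style descent step: if `‖g - ∇F(w)‖² ≤ α·α̃`, `α ≤ α̃`, `c ≤ α̃` and `‖g‖ > 2α̃`,
then the normalized step `η = c/(L₁‖g‖)` decreases `F` by at least `c·α̃/(4L₁)`. -/
theorem stmt_8 (d : ℕ) (F : EuclideanSpace ℝ (Fin d) → ℝ)
    (hdiff : Differentiable ℝ F)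
    (L₁ : ℝ) (hL₁ : 0 < L₁) (hlip : LipschitzWith L₁.toNNReal (gradient F))
    (w g : EuclideanSpace ℝ (Fin d)) (α αt c : ℝ)
    (hα : 0 < α) (hαt : 0 < αt) (hc : 0 < c)
    (herr : ‖g - gradient F w‖ ^ 2 ≤ α * αt)
    (hααt : α ≤ αt) (hcαt : c ≤ αt) (hg : 2 * αt < ‖g‖) :
    F (w - (c / (L₁ * ‖g‖)) • g) ≤ F w - c * αt / (4 * L₁) := by
  set G := ‖g‖ with hGdef
  have hG : 0 < G := lt_trans (by positivity) hg
  set η := c / (L₁ * G) with hηdef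
  have hη : 0 < η := by positivity
  have key := descent_aux F hdiff L₁.toNNReal hlip w (-(η • g))
  have hL₁' : ((L₁.toNNReal : ℝ)) = L₁ := Real.coe_toNNReal L₁ hL₁.le
  rw [hL₁'] at key
  have hsub : w - η • g = w + -(η • g) := by abel
  rw [hsub]
  have hnv : ‖-(η • g)‖ ^ 2 = η ^ 2 * G ^ 2 := by
    rw [norm_neg, norm_smul, Real.norm_eq_abs, abs_of_pos hη]; ring
  have hinner : ⟪gradient F w, -(η • g)⟫_ℝ = -(η * ⟪gradient F w, g⟫_ℝ) := by
    rw [inner_neg_right, real_inner_smul_right]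
  -- lower bound on ⟪∇F w, g⟫
  have herr' : ‖g - gradient F w‖ ≤ αt := by
    nlinarith [norm_nonneg (g - gradient F w)]
  have h1 : ⟪g - gradient F w, g⟫_ℝ ≤ αt * G :=
    le_trans (real_inner_le_norm _ _) (by nlinarith)
  have h2 : ⟪gradient F w, g⟫_ℝ = G ^ 2 - ⟪g - gradient F w, g⟫_ℝ := by
    rw [inner_sub_left, ← real_inner_self_eq_norm_sq]; ring
  have h3 : G ^ 2 - αt * G ≤ ⟪gradient F w, g⟫_ℝ := by rw [h2]; linarith
  rw [hnv, hinner] at key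
  have hfin : F w + -(η * ⟪gradient F w, g⟫_ℝ) + L₁ / 2 * (η ^ 2 * G ^ 2)
      ≤ F w - c * αt / (4 * L₁) := by
    have hηG : η * G = c / L₁ := by
      rw [hηdef]; field_simp
    have h4 : η * ⟪gradient F w, g⟫_ℝ ≥ η * (G ^ 2 - αt * G) :=
      mul_le_mul_of_nonneg_left h3 hη.le
    have h5 : η * (G ^ 2 - αt * G) = (c / L₁) * (G - αt) := by
      rw [← hηG]; ring
    have h6 : L₁ / 2 * (η ^ 2 * G ^ 2) = c ^ 2 / (2 * L₁) := by
      rw [hηdef]; field_simp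
    rw [h6]
    have : (c / L₁) * (G - αt) - c ^ 2 / (2 * L₁) ≥ c * αt / (4 * L₁) := by
      have h8 : c * αt ≤ 4 * (c * (G - αt)) - 2 * c ^ 2 := by nlinarith
      have h9 : c / L₁ * (G - αt) - c ^ 2 / (2 * L₁) = (4 * (c * (G - αt)) - 2 * c ^ 2) / (4 * L₁) := by
        field_simp; ring
      rw [ge_iff_le, h9]
      exact div_le_div_of_nonneg_right h8 (by positivity) |>.trans_eq rfl
    linarith
  linarith
end

section
/- Let 0 < λ ≤ β, let f : ℝ^d → ℝ be differentiable, λ-strongly convex, and have β-Lipschitz gradient, and let 0 < η ≤ 1/β. Then for all w, v ∈ ℝ^d, ‖(w − η·∇f(w)) − (v − η·∇f(v))‖ ≤ (1 − η·λ)·‖w − v‖; that is, the gradient-descent step with step size η is a (1 − ηλ)-contraction. -/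
open Set InnerProductSpace

variable {E : Type*} [NormedAddCommGroup E] [InnerProductSpace ℝ E] [CompleteSpace E]

local notation "⟪" x ", " y "⟫" => @inner ℝ _ _ x y

lemma line_hasDerivAt (f : E → ℝ) (hf : Differentiable ℝ f) (x u : E) (t : ℝ) :
    HasDerivAt (fun s : ℝ => f (x + s • u)) ⟪gradient f (x + t • u), u⟫ t := by
  have h1 : HasDerivAt (fun s : ℝ => x + s • u) u t := by
    simpa using ((hasDerivAt_id t).smul_const u).const_add x
  have h2 := ((hf (x + t • u)).hasGradientAt.hasFDerivAt).comp_hasDerivAt t h1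
  simp [InnerProductSpace.toDual_apply_apply] at h2 ⊢
  exact h2

lemma convex_first_order (f : E → ℝ) (hf : Differentiable ℝ f)
    (hc : ConvexOn ℝ Set.univ f) (x y : E) :
    f x + ⟪gradient f x, y - x⟫ ≤ f y := by
  set g : ℝ → ℝ := fun t => f (x + t • (y - x)) with hgdef
  have hconv : ConvexOn ℝ Set.univ g := by
    have h := hc.comp_affineMap (AffineMap.lineMap x y : ℝ →ᵃ[ℝ] E)
    have : (f ∘ (AffineMap.lineMap x y : ℝ →ᵃ[ℝ] E)) = g := by
      funext t
      simp [hgdef, AffineMap.lineMap_apply_module', add_comm]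
    rw [this] at h
    simpa using h
  have hder : HasDerivAt g ⟪gradient f x, y - x⟫ 0 := by
    have := line_hasDerivAt f hf x (y - x) 0
    simpa using this
  have hs := hconv.le_slope_of_hasDerivAt (mem_univ (0:ℝ)) (mem_univ (1:ℝ))
    one_pos hder
  have : slope g 0 1 = f y - f x := by
    simp [slope_def_field, hgdef]
  rw [this] at hs
  linarith

lemma descent_lemma (f : E → ℝ) (hf : Differentiable ℝ f) (C : NNReal)
    (hlip : LipschitzWith C (gradient f)) (x y : E) :
    f y ≤ f x + ⟪gradient f x, y - x⟫ + (C : ℝ) / 2 * ‖y - x‖ ^ 2 := by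
  set u := y - x with hu
  set G : ℝ → ℝ := fun t => ⟪gradient f (x + t • u), u⟫ with hG
  have hcontG : Continuous G := by
    apply Continuous.inner
    · exact hlip.continuous.comp (by continuity)
    · exact continuous_const
  have key : ∫ t in (0:ℝ)..1, G t = f y - f x := by
    have := intervalIntegral.integral_eq_sub_of_hasDerivAt
      (f := fun t : ℝ => f (x + t • u)) (f' := G)
      (fun t _ => line_hasDerivAt f hf x u t) (hcontG.intervalIntegrable 0 1)
    simpa [hu] using this
  have hbound : ∫ t in (0:ℝ)..1, G t ≤
      ∫ t in (0:ℝ)..1, (⟪gradient f x, u⟫ + (C : ℝ) * ‖u‖ ^ 2 * t) := by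
    apply intervalIntegral.integral_mono_on zero_le_one
      (hcontG.intervalIntegrable 0 1)
      (by apply Continuous.intervalIntegrable; continuity)
    intro t ht
    have h1 : G t - ⟪gradient f x, u⟫ = ⟪gradient f (x + t • u) - gradient f x, u⟫ := by
      simp [hG, inner_sub_left]
    have h2 : ⟪gradient f (x + t • u) - gradient f x, u⟫ ≤
        ‖gradient f (x + t • u) - gradient f x‖ * ‖u‖ := real_inner_le_norm _ _
    have h3 : ‖gradient f (x + t • u) - gradient f x‖ ≤ (C : ℝ) * (t * ‖u‖) := by
      have := hlip.dist_le_mul (x + t • u) x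
      rw [dist_eq_norm, dist_eq_norm] at this
      simpa [norm_smul, abs_of_nonneg ht.1] using this
    nlinarith [norm_nonneg u, ht.1]
  have hint : ∫ t in (0:ℝ)..1, (⟪gradient f x, u⟫ + (C : ℝ) * ‖u‖ ^ 2 * t)
      = ⟪gradient f x, u⟫ + (C : ℝ) / 2 * ‖u‖ ^ 2 := by
    rw [intervalIntegral.integral_add (intervalIntegrable_const)
      (by apply Continuous.intervalIntegrable; continuity),
      intervalIntegral.integral_const_mul, integral_id]
    simp; ring
  rw [key] at hbound
  rw [hint] at hbound
  linarith

lemma quad_hasFDerivAt (lam : ℝ) (x : E) :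
    HasFDerivAt (fun w : E => lam / 2 * ‖w‖ ^ 2) (toDual ℝ E (lam • x)) x := by
  have h1 : HasFDerivAt (fun w : E => ⟪w, w⟫)
      ((fderivInnerCLM ℝ (x, x)).comp
        ((ContinuousLinearMap.id ℝ E).prod (ContinuousLinearMap.id ℝ E))) x :=
    HasFDerivAt.inner (𝕜 := ℝ) (hasFDerivAt_id x) (hasFDerivAt_id x)
  have h2 := h1.const_mul (lam / 2)
  have heq : (fun w : E => lam / 2 * ⟪w, w⟫) = fun w : E => lam / 2 * ‖w‖ ^ 2 := by
    funext w; rw [real_inner_self_eq_norm_sq]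
  rw [heq] at h2
  refine h2.congr_fderiv ?_
  ext v
  simp [toDual_apply_apply, fderivInnerCLM_apply, inner_smul_left, real_inner_comm]
  ring

lemma h_hasGradientAt (f : E → ℝ) (hf : Differentiable ℝ f) (lam : ℝ) (x : E) :
    HasGradientAt (fun w => f w - lam / 2 * ‖w‖ ^ 2) (gradient f x - lam • x) x := by
  rw [hasGradientAt_iff_hasFDerivAt, map_sub]
  exact ((hf x).hasGradientAt.hasFDerivAt).sub (quad_hasFDerivAt lam x)

lemma coco_half (h : E → ℝ) (hdiff : Differentiable ℝ h) (hconv : ConvexOn ℝ Set.univ h)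
    (M : ℝ) (hM : 0 < M)
    (hdesc : ∀ x y : E, h y ≤ h x + ⟪gradient h x, y - x⟫ + M / 2 * ‖y - x‖ ^ 2) (x y : E) :
    h x + ⟪gradient h x, y - x⟫ + 1 / (2 * M) * ‖gradient h y - gradient h x‖ ^ 2 ≤ h y := by
  set g := gradient h y - gradient h x with hg
  set z := y - M⁻¹ • g with hz
  have hA := convex_first_order h hdiff hconv x z
  have hB := hdesc y z
  have hzy : z - y = -(M⁻¹ • g) := by rw [hz]; abel
  have hzx : z - x = (y - x) - M⁻¹ • g := by rw [hz]; abel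
  have e1 : ⟪gradient h y, z - y⟫ = -(M⁻¹ * ⟪gradient h y, g⟫) := by
    rw [hzy, inner_neg_right, real_inner_smul_right]
  have e2 : ‖z - y‖ ^ 2 = M⁻¹ ^ 2 * ‖g‖ ^ 2 := by
    rw [hzy, norm_neg, norm_smul]
    rw [Real.norm_eq_abs, abs_of_pos (inv_pos.mpr hM)]
    ring
  have e3 : ⟪gradient h x, z - x⟫
      = ⟪gradient h x, y - x⟫ - M⁻¹ * ⟪gradient h x, g⟫ := by
    rw [hzx, inner_sub_right, real_inner_smul_right]
  have e4 : ⟪gradient h y, g⟫ - ⟪gradient h x, g⟫ = ‖g‖ ^ 2 := by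
    rw [← inner_sub_left, ← hg, real_inner_self_eq_norm_sq]
  rw [e1, e2] at hB
  rw [e3] at hA
  have hMinv : M * M⁻¹ = 1 := mul_inv_cancel₀ hM.ne'
  have h5 : 1 / (2 * M) * ‖g‖ ^ 2 = M⁻¹ * ‖g‖ ^ 2 - M / 2 * (M⁻¹ ^ 2 * ‖g‖ ^ 2) := by
    field_simp; ring
  nlinarith [hA, hB, e4, hMinv]

lemma coco (h : E → ℝ) (hdiff : Differentiable ℝ h) (hconv : ConvexOn ℝ Set.univ h)
    (M : ℝ) (hM : 0 < M)
    (hdesc : ∀ x y : E, h y ≤ h x + ⟪gradient h x, y - x⟫ + M / 2 * ‖y - x‖ ^ 2) (x y : E) :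
    ‖gradient h y - gradient h x‖ ^ 2 ≤ M * ⟪gradient h y - gradient h x, y - x⟫ := by
  have h1 := coco_half h hdiff hconv M hM hdesc x y
  have h2 := coco_half h hdiff hconv M hM hdesc y x
  have e1 : ‖gradient h x - gradient h y‖ = ‖gradient h y - gradient h x‖ := norm_sub_rev _ _
  rw [e1] at h2
  have e2 : ⟪gradient h y - gradient h x, y - x⟫
      = ⟪gradient h y, y - x⟫ - ⟪gradient h x, y - x⟫ := inner_sub_left _ _ _
  have e3 : ⟪gradient h y, x - y⟫ = -⟪gradient h y, y - x⟫ := by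
    rw [← inner_neg_right]; congr 1; abel
  rw [e3] at h2
  have hhalf : 1 / (2 * M) * ‖gradient h y - gradient h x‖ ^ 2 * 2
      ≤ ⟪gradient h y - gradient h x, y - x⟫ := by
    rw [e2]; linarith
  have e5 : ‖gradient h y - gradient h x‖ ^ 2
      = M * (1 / (2 * M) * ‖gradient h y - gradient h x‖ ^ 2 * 2) := by
    field_simp
  rw [e5]
  exact mul_le_mul_of_nonneg_left hhalf hM.le

lemma le_of_sq_le_sq' (a b : ℝ) (ha : 0 ≤ a) (hb : 0 ≤ b) (h : a ^ 2 ≤ b ^ 2) : a ≤ b := by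
  nlinarith

set_option maxHeartbeats 1000000 in
/-- A gradient-descent step with step size `0 < η ≤ 1/β` on a `λ`-strongly convex, `β`-smooth
function is a `(1 - ηλ)`-contraction. -/
theorem stmt_9 (d : ℕ) (lam β : ℝ) (hlam : 0 < lam) (hlamβ : lam ≤ β)
    (f : EuclideanSpace ℝ (Fin d) → ℝ)
    (hdiff : Differentiable ℝ f)
    (hsc : ConvexOn ℝ Set.univ (fun w => f w - lam / 2 * ‖w‖ ^ 2))
    (hlip : LipschitzWith β.toNNReal (gradient f))
    (η : ℝ) (hη0 : 0 < η) (hη : η ≤ 1 / β) :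
    ∀ w v : EuclideanSpace ℝ (Fin d),
      ‖(w - η • gradient f w) - (v - η • gradient f v)‖ ≤ (1 - η * lam) * ‖w - v‖ := by
  intro w v
  have hβ : 0 < β := hlam.trans_le hlamβ
  have hcoe : (β.toNNReal : ℝ) = β := Real.coe_toNNReal β hβ.le
  set h : EuclideanSpace ℝ (Fin d) → ℝ := fun w => f w - lam / 2 * ‖w‖ ^ 2 with hh
  have hdiff_h : Differentiable ℝ h := fun x =>
    (h_hasGradientAt f hdiff lam x).differentiableAt
  have hgrad_h : ∀ x : EuclideanSpace ℝ (Fin d), gradient h x = gradient f x - lam • x := fun x =>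
    (h_hasGradientAt f hdiff lam x).gradient
  -- Lipschitz bound and descent lemma for f
  have hηβ : η * β ≤ 1 := by
    rw [← le_div_iff₀ hβ]; exact hη
  have heta_lam : η * lam ≤ 1 := le_trans (by nlinarith) hηβ
  have hdesc_f := descent_lemma f hdiff β.toNNReal hlip
  rw [hcoe] at hdesc_f
  -- descent lemma for h
  have hdesc_h : ∀ x y : EuclideanSpace ℝ (Fin d), h y ≤ h x + ⟪gradient h x, y - x⟫ + (β - lam) / 2 * ‖y - x‖ ^ 2 := by
    intro x y
    have hnorm : ‖y‖ ^ 2 = ‖x‖ ^ 2 + 2 * ⟪x, y - x⟫ + ‖y - x‖ ^ 2 := by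
      have : y = x + (y - x) := by abel
      rw [this]
      rw [show x + (y - x) - x = y - x by abel]
      exact norm_add_sq_real x (y - x)
    have hgx : ⟪gradient h x, y - x⟫ = ⟪gradient f x, y - x⟫ - lam * ⟪x, y - x⟫ := by
      rw [hgrad_h, inner_sub_left, real_inner_smul_left]
    have := hdesc_f x y
    simp only [hh]
    rw [hgx]
    nlinarith [this, hnorm]
  -- expansion of the step difference
  set u := w - v with hu
  set gf := gradient f w - gradient f v with hgf
  have hstep : (w - η • gradient f w) - (v - η • gradient f v) = u - η • gf := by
    rw [hu, hgf]; module
  rw [hstep]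
  have h1m : 0 ≤ 1 - η * lam := by linarith
  rcases eq_or_lt_of_le hlamβ with heq | hlt
  · -- lam = β : gradient monotone + Lipschitz suffice
    subst heq
    have hmono : lam * ‖u‖ ^ 2 ≤ ⟪gf, u⟫ := by
      have hA := convex_first_order h hdiff_h hsc v w
      have hB := convex_first_order h hdiff_h hsc w v
      have e1 : ⟪gradient h v, w - v⟫
          = ⟪gradient f v, u⟫ - lam * ⟪v, u⟫ := by
        rw [hgrad_h, inner_sub_left, real_inner_smul_left, hu]
      have e2 : ⟪gradient h w, v - w⟫
          = -(⟪gradient f w, u⟫ - lam * ⟪w, u⟫) := by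
        rw [hgrad_h, inner_sub_left, real_inner_smul_left]
        rw [show v - w = -u by rw [hu]; abel, inner_neg_right, inner_neg_right]
        ring
      rw [e1] at hA
      rw [e2] at hB
      have e3 : ⟪gf, u⟫ = ⟪gradient f w, u⟫ - ⟪gradient f v, u⟫ := by
        rw [hgf, inner_sub_left]
      have e4 : ⟪w, u⟫ - ⟪v, u⟫ = ‖u‖ ^ 2 := by
        rw [← inner_sub_left, ← hu, real_inner_self_eq_norm_sq]
      nlinarith [hA, hB]
    have hlipn : ‖gf‖ ≤ lam * ‖u‖ := by
      have := hlip.dist_le_mul w v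
      rw [dist_eq_norm, dist_eq_norm, hcoe] at this
      rw [hgf, hu]; exact this
    have hsq : ‖u - η • gf‖ ^ 2 ≤ ((1 - η * lam) * ‖u‖) ^ 2 := by
      rw [norm_sub_sq_real, real_inner_smul_right, norm_smul, Real.norm_eq_abs,
        abs_of_pos hη0, real_inner_comm]
      have hn2 : ‖gf‖ * ‖gf‖ ≤ (lam * ‖u‖) * (lam * ‖u‖) :=
        mul_le_mul hlipn hlipn (norm_nonneg _) (by positivity)
      nlinarith [mul_le_mul_of_nonneg_left hmono hη0.le,
        mul_le_mul_of_nonneg_left hn2 (sq_nonneg η), hη0, sq_nonneg ‖u‖]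
    exact le_of_sq_le_sq' _ _ (norm_nonneg _) (by positivity) hsq
  · -- lam < β : cocoercivity of the convex part
    set M : ℝ := β - lam with hM
    have hM0 : 0 < M := by rw [hM]; linarith
    have hcoco := coco h hdiff_h hsc M hM0 hdesc_h v w
    set gh := gf - lam • u with hgh
    have egh : gradient h w - gradient h v = gh := by
      rw [hgrad_h, hgrad_h, hgh, hgf, hu]; module
    rw [egh, show w - v = u from hu.symm] at hcoco
    have hT : u - η • gf = (1 - η * lam) • u - η • gh := by
      rw [hgh]; module
    rw [hT]
    have hinn : 0 ≤ ⟪gh, u⟫ := by nlinarith [sq_nonneg ‖gh‖, hcoco, hM0]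
    have hsq : ‖(1 - η * lam) • u - η • gh‖ ^ 2 ≤ ((1 - η * lam) * ‖u‖) ^ 2 := by
      rw [norm_sub_sq_real, real_inner_smul_right, real_inner_smul_left, norm_smul, norm_smul,
        Real.norm_eq_abs, Real.norm_eq_abs, abs_of_pos hη0, abs_of_nonneg h1m,
        real_inner_comm]
      have k2 : η * M ≤ 2 * (1 - η * lam) := by rw [hM]; nlinarith
      have k3 : (η * M) * ⟪gh, u⟫ ≤ (2 * (1 - η * lam)) * ⟪gh, u⟫ :=
        mul_le_mul_of_nonneg_right k2 hinn
      have k1 : η ^ 2 * ‖gh‖ ^ 2 ≤ η ^ 2 * (M * ⟪gh, u⟫) :=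
        mul_le_mul_of_nonneg_left hcoco (by positivity)
      have k4 : η * ((η * M) * ⟪gh, u⟫) ≤ η * ((2 * (1 - η * lam)) * ⟪gh, u⟫) :=
        mul_le_mul_of_nonneg_left k3 hη0.le
      nlinarith [k1, k4]
    exact le_of_sq_le_sq' _ _ (norm_nonneg _) (by positivity) hsq
end

section
/- Let x₁, ..., x_n ∈ ℝ^d, let φ₁, ..., φ_n : ℝ → ℝ be differentiable, let Φ : ℝ^d → ℝ^k be a linear map, and let τ ∈ [0, 1) be such that ‖Φ v‖ ≥ (1 − τ)·‖v‖ for every v in the linear span of {x₁, ..., x_n}. Let F be the GLM empirical risk and F̃ the embedded empirical risk. Then for every u ∈ ℝ^k, ∇F̃(u) = Φ(∇F(Φᵀ u)) and consequently ‖∇F̃(u)‖ ≥ (1 − τ)·‖∇F(Φᵀ u)‖. -/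
open RealInnerProductSpace

lemma grad_aux {E : Type*} [NormedAddCommGroup E] [InnerProductSpace ℝ E] [CompleteSpace E]
    {n : ℕ} (a : Fin n → E) (φ : Fin n → ℝ → ℝ) (hφ : ∀ i, Differentiable ℝ (φ i)) (w : E) :
    HasGradientAt (fun w => (1 / (n : ℝ)) * ∑ i, φ i ⟪w, a i⟫)
      ((1 / (n : ℝ)) • ∑ i, deriv (φ i) ⟪w, a i⟫ • a i) w := by
  rw [hasGradientAt_iff_hasFDerivAt]
  have key : ∀ i : Fin n, HasFDerivAt (fun w => φ i ⟪w, a i⟫)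
      (deriv (φ i) ⟪w, a i⟫ • (innerSL ℝ (a i))) w := by
    intro i
    have h1 : HasFDerivAt (fun w : E => ⟪a i, w⟫) (innerSL ℝ (a i)) w :=
      (innerSL ℝ (a i)).hasFDerivAt
    have h2 := ((hφ i ⟪a i, w⟫).hasDerivAt).comp_hasFDerivAt w h1
    have heq : (fun w : E => φ i ⟪w, a i⟫) = (φ i ∘ fun w => ⟪a i, w⟫) := by
      ext v; rw [Function.comp_apply, real_inner_comm]
    rw [heq, real_inner_comm (a i) w]
    exact h2
  have hs : HasFDerivAt (fun w => ∑ i, φ i ⟪w, a i⟫)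
      (∑ i, deriv (φ i) ⟪w, a i⟫ • (innerSL ℝ (a i))) w := HasFDerivAt.fun_sum fun i _ => key i
  have := hs.const_mul (1 / (n : ℝ))
  convert this using 1
  ext v
  simp [InnerProductSpace.toDual_apply_apply, inner_smul_left, inner_sum, Finset.mul_sum, real_inner_comm]
  ext v
  simp [InnerProductSpace.toDual_apply_apply, inner_smul_left, inner_sum, Finset.mul_sum, real_inner_comm]

/-- If the linear map `Φ` does not shrink vectors in the span of the data by more than a factor
`1 - τ`, then the gradient of the embedded GLM risk at `u` equals `Φ(∇F(Φᵀu))` and its norm is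
at least `(1 - τ)‖∇F(Φᵀu)‖`. -/
theorem stmt_11 (d k n : ℕ) (hn : 0 < n)
    (x : Fin n → EuclideanSpace ℝ (Fin d))
    (φ : Fin n → ℝ → ℝ) (hφ : ∀ i, Differentiable ℝ (φ i))
    (Φ : EuclideanSpace ℝ (Fin d) →L[ℝ] EuclideanSpace ℝ (Fin k))
    (τ : ℝ) (hτ0 : 0 ≤ τ) (hτ1 : τ < 1)
    (hemb : ∀ v ∈ Submodule.span ℝ (Set.range x), (1 - τ) * ‖v‖ ≤ ‖Φ v‖)
    (F : EuclideanSpace ℝ (Fin d) → ℝ)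
    (hF : ∀ w, F w = (1 / (n : ℝ)) * ∑ i, φ i ⟪w, x i⟫)
    (Ft : EuclideanSpace ℝ (Fin k) → ℝ)
    (hFt : ∀ u, Ft u = (1 / (n : ℝ)) * ∑ i, φ i ⟪u, Φ (x i)⟫) :
    ∀ u : EuclideanSpace ℝ (Fin k),
      gradient Ft u = Φ (gradient F ((ContinuousLinearMap.adjoint Φ) u)) ∧
      (1 - τ) * ‖gradient F ((ContinuousLinearMap.adjoint Φ) u)‖ ≤ ‖gradient Ft u‖ := by
  intro u
  set A := ContinuousLinearMap.adjoint Φ with hA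
  have hFe : F = fun w => (1 / (n : ℝ)) * ∑ i, φ i ⟪w, x i⟫ := funext hF
  have hFte : Ft = fun u => (1 / (n : ℝ)) * ∑ i, φ i ⟪u, Φ (x i)⟫ := funext hFt
  have gF : gradient F (A u) = (1 / (n : ℝ)) • ∑ i, deriv (φ i) ⟪A u, x i⟫ • x i := by
    rw [hFe]; exact (grad_aux x φ hφ (A u)).gradient
  have gFt : gradient Ft u
      = (1 / (n : ℝ)) • ∑ i, deriv (φ i) ⟪u, Φ (x i)⟫ • Φ (x i) := by
    rw [hFte]; exact (grad_aux (fun i => Φ (x i)) φ hφ u).gradient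
  have hinner : ∀ i, ⟪A u, x i⟫ = ⟪u, Φ (x i)⟫ := fun i =>
    ContinuousLinearMap.adjoint_inner_left Φ (x i) u
  have heq : gradient Ft u = Φ (gradient F (A u)) := by
    rw [gF, gFt, map_smul, map_sum]
    congr 1
    refine Finset.sum_congr rfl fun i _ => ?_
    rw [hinner i, map_smul]
  refine ⟨heq, ?_⟩
  rw [heq]
  refine hemb _ ?_
  rw [gF]
  exact Submodule.smul_mem _ _ (Submodule.sum_mem _ fun i _ =>
    Submodule.smul_mem _ _ (Submodule.subset_span ⟨i, rfl⟩))
end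

section
/- Let x₁, ..., x_n ∈ ℝ^d with ‖x_i‖ ≤ X for all i, let φ₁, ..., φ_n : ℝ → ℝ be differentiable with |φ_i'(z)| ≤ L₀ for all z ∈ ℝ and all i, let Φ : ℝ^d → ℝ^k be a linear map, and let E : ℝ^k → ℝ^d be a linear isometry. Let F be the GLM empirical risk and F̃ the embedded empirical risk. Then for every u ∈ ℝ^k, ‖∇F(Φᵀ u)‖ ≤ ‖∇F̃(u)‖ + L₀ · X · ‖id_{ℝ^d} − E ∘ Φ‖, where ‖id_{ℝ^d} − E ∘ Φ‖ is the operator norm. -/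
open RealInnerProductSpace

lemma aux_grad {E : Type*} [NormedAddCommGroup E] [InnerProductSpace ℝ E] [CompleteSpace E]
    {n : ℕ} (x : Fin n → E)
    (φ : Fin n → ℝ → ℝ) (hφ : ∀ i, Differentiable ℝ (φ i))
    (w : E) :
    HasGradientAt (fun w => (1 / (n:ℝ)) * ∑ i, φ i ⟪w, x i⟫)
      ((1 / (n:ℝ)) • ∑ i, deriv (φ i) ⟪w, x i⟫ • x i) w := by
  have h1 : ∀ i : Fin n, HasFDerivAt (fun w : E => φ i ⟪w, x i⟫)
      (deriv (φ i) ⟪w, x i⟫ • (innerSL ℝ (x i))) w := by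
    intro i
    have heq : (fun w : E => ⟪w, x i⟫) = fun w => (innerSL ℝ (x i)) w := by
      ext v; exact real_inner_comm _ _
    have hinner : HasFDerivAt (fun w : E => ⟪w, x i⟫) (innerSL ℝ (x i)) w := by
      rw [heq]; exact (innerSL ℝ (x i)).hasFDerivAt
    exact (hφ i ⟪w, x i⟫).hasDerivAt.comp_hasFDerivAt w hinner
  have hsum : HasFDerivAt (fun w : E => ∑ i, φ i ⟪w, x i⟫)
      (∑ i, deriv (φ i) ⟪w, x i⟫ • (innerSL ℝ (x i))) w :=
    HasFDerivAt.fun_sum (fun i _ => h1 i)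
  have hmul := hsum.const_mul ((1 : ℝ) / n)
  rw [hasGradientAt_iff_hasFDerivAt]
  convert hmul using 1
  · rfl
  apply ContinuousLinearMap.ext
  intro v
  simp [InnerProductSpace.toDual_apply_apply, inner_smul_left, sum_inner, real_inner_smul_left,
    Finset.mul_sum, ContinuousLinearMap.sum_apply]

/-- Comparing the GLM empirical gradient at `Φᵀu` with the embedded gradient at `u`:
`‖∇F(Φᵀu)‖ ≤ ‖∇F̃(u)‖ + L₀ X ‖id - E ∘ Φ‖` for any linear isometry `E : ℝᵏ → ℝᵈ`. -/
theorem stmt_12 (d k n : ℕ) (hn : 0 < n) (L₀ X : ℝ)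
    (x : Fin n → EuclideanSpace ℝ (Fin d)) (hx : ∀ i, ‖x i‖ ≤ X)
    (φ : Fin n → ℝ → ℝ) (hφ : ∀ i, Differentiable ℝ (φ i))
    (hφ' : ∀ i, ∀ z : ℝ, |deriv (φ i) z| ≤ L₀)
    (Φ : EuclideanSpace ℝ (Fin d) →L[ℝ] EuclideanSpace ℝ (Fin k))
    (E : EuclideanSpace ℝ (Fin k) →ₗᵢ[ℝ] EuclideanSpace ℝ (Fin d))
    (F : EuclideanSpace ℝ (Fin d) → ℝ)
    (hF : ∀ w, F w = (1 / (n : ℝ)) * ∑ i, φ i ⟪w, x i⟫)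
    (Ft : EuclideanSpace ℝ (Fin k) → ℝ)
    (hFt : ∀ u, Ft u = (1 / (n : ℝ)) * ∑ i, φ i ⟪u, Φ (x i)⟫) :
    ∀ u : EuclideanSpace ℝ (Fin k),
      ‖gradient F ((ContinuousLinearMap.adjoint Φ) u)‖ ≤ ‖gradient Ft u‖
        + L₀ * X * ‖ContinuousLinearMap.id ℝ (EuclideanSpace ℝ (Fin d))
            - E.toContinuousLinearMap.comp Φ‖ := by
  intro u
  have hFeq : F = fun w => (1 / (n : ℝ)) * ∑ i, φ i ⟪w, x i⟫ := funext hF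
  have hFteq : Ft = fun u => (1 / (n : ℝ)) * ∑ i, φ i ⟪u, Φ (x i)⟫ := funext hFt
  set w := (ContinuousLinearMap.adjoint Φ) u with hw
  have hadj : ∀ i, ⟪w, x i⟫ = ⟪u, Φ (x i)⟫ := fun i =>
    ContinuousLinearMap.adjoint_inner_left Φ (x i) u
  set c : Fin n → ℝ := fun i => deriv (φ i) ⟪u, Φ (x i)⟫ with hc
  have hg : gradient F w = (1 / (n:ℝ)) • ∑ i, c i • x i := by
    rw [hFeq, (aux_grad x φ hφ w).gradient]
    congr 1
    exact Finset.sum_congr rfl fun i _ => by rw [hadj i]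
  have hgt : gradient Ft u = (1 / (n:ℝ)) • ∑ i, c i • Φ (x i) := by
    rw [hFteq, (aux_grad (fun i => Φ (x i)) φ hφ u).gradient]
  set T := ContinuousLinearMap.id ℝ (EuclideanSpace ℝ (Fin d))
      - E.toContinuousLinearMap.comp Φ with hT
  have hL₀ : 0 ≤ L₀ := le_trans (abs_nonneg _) (hφ' ⟨0, hn⟩ 0)
  have hX : 0 ≤ X := le_trans (norm_nonneg _) (hx ⟨0, hn⟩)
  have hkey : gradient F w = E (gradient Ft u)
      + (1 / (n:ℝ)) • ∑ i, c i • T (x i) := by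
    rw [hg, hgt, E.map_smul, map_sum, ← smul_add, ← Finset.sum_add_distrib]
    congr 1
    refine Finset.sum_congr rfl fun i _ => ?_
    rw [E.map_smul, ← smul_add]
    congr 1
    simp [hT, ContinuousLinearMap.sub_apply]
  rw [hkey]
  refine le_trans (norm_add_le _ _) ?_
  rw [E.norm_map]
  gcongr
  calc ‖(1 / (n:ℝ)) • ∑ i, c i • T (x i)‖
      = (1 / (n:ℝ)) * ‖∑ i, c i • T (x i)‖ := by
        rw [norm_smul, Real.norm_eq_abs, abs_of_nonneg (by positivity)]
    _ ≤ (1 / (n:ℝ)) * ∑ i, ‖c i • T (x i)‖ := by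
        gcongr; exact norm_sum_le _ _
    _ ≤ (1 / (n:ℝ)) * ∑ i : Fin n, L₀ * (X * ‖T‖) := by
        gcongr with i _
        rw [norm_smul, Real.norm_eq_abs]
        refine mul_le_mul (hφ' i _) ?_ (norm_nonneg _) hL₀
        calc ‖T (x i)‖ ≤ ‖T‖ * ‖x i‖ := T.le_opNorm _
          _ ≤ ‖T‖ * X := by gcongr; exact hx i
          _ = X * ‖T‖ := mul_comm _ _
    _ = L₀ * X * ‖T‖ := by
        have hn' : (n:ℝ) ≠ 0 := Nat.cast_ne_zero.mpr hn.ne'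
        rw [Finset.sum_const, Finset.card_univ, Fintype.card_fin, nsmul_eq_mul,
          ← mul_assoc, one_div_mul_cancel hn', one_mul]
        ring
end

section
/- Let (Ω, 𝓐, μ) be a probability space with filtration (ℱ_k)_{k∈ℕ}, let g : ℝ^d → ℝ^d be a (Borel measurable) map, and let τ₁, τ₂ ≥ 0. Let w₀, ..., w_t, ∇₀, ..., ∇_t, Δ₁, ..., Δ_t : Ω → ℝ^d be square-integrable random vectors such that: (i) w₀ and ∇₀ are ℱ₀-measurable and 𝔼[‖∇₀ − g(w₀)‖²] ≤ τ₁²; (ii) for each k ∈ {1, ..., t}, w_k is ℱ_{k−1}-measurable, Δ_k is ℱ_k-measurable, the conditional expectation of Δ_k given ℱ_{k−1} equals g(w_k) − g(w_{k−1}) almost everywhere, and 𝔼[‖Δ_k − (g(w_k) − g(w_{k−1}))‖² | ℱ_{k−1}] ≤ τ₂²·‖w_k − w_{k−1}‖² almost everywhere; (iii) ∇_k = ∇_{k−1} + Δ_k for each k ∈ {1, ..., t}. Then 𝔼[‖∇_t − g(w_t)‖²] ≤ τ₂²·Σ_{k=1}^t 𝔼[‖w_k − w_{k−1}‖²] + τ₁².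 -/
open MeasureTheory

section Helpers

variable {α : Type*} {m m0 : MeasurableSpace α} {μ : Measure α}

/-- The conditional expectation of an `L²` function is in `L²`. -/
lemma memLp_condexp_two {E : Type*} [NormedAddCommGroup E] [InnerProductSpace ℝ E]
    [CompleteSpace E] (hm : m ≤ m0) [IsFiniteMeasure μ] {f : α → E} (hf : MemLp f 2 μ) :
    MemLp (μ[f|m]) 2 μ := by
  have hae : (↑↑(condExpL2 E ℝ hm (hf.toLp f) : Lp E 2 μ) : α → E) =ᵐ[μ] μ[f|m] := by
    refine ae_eq_condExp_of_forall_setIntegral_eq hm (hf.integrable one_le_two)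
      (fun s _ hμs => integrableOn_Lp_of_measure_ne_top _ fact_one_le_two_ennreal.elim hμs.ne)
      (fun s hs hμs => ?_) ?_
    · rw [integral_condExpL2_eq hm (hf.toLp f) hs hμs.ne]
      exact setIntegral_congr_ae (hm s hs) (hf.coeFn_toLp.mono fun x hx _ => hx)
    · exact lpMeas.aestronglyMeasurable _
  exact (Lp.memLp _).ae_eq hae

lemma integrable_mul_L2 {f g : α → ℝ} (hf : MemLp f 2 μ) (hg : MemLp g 2 μ) :
    Integrable (fun x => f x * g x) μ := by
  have h := L2.integrable_inner (𝕜 := ℝ) (hf.toLp f) (hg.toLp g)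
  refine h.congr ?_
  filter_upwards [hf.coeFn_toLp, hg.coeFn_toLp] with x h1 h2
  simp [h1, h2, RCLike.inner_apply, mul_comm]

lemma integrable_inner_L2 {E : Type*} [NormedAddCommGroup E] [InnerProductSpace ℝ E]
    {f g : α → E} (hf : MemLp f 2 μ) (hg : MemLp g 2 μ) :
    Integrable (fun x => (inner ℝ (f x) (g x) : ℝ)) μ := by
  have h := L2.integrable_inner (𝕜 := ℝ) (hf.toLp f) (hg.toLp g)
  refine h.congr ?_
  filter_upwards [hf.coeFn_toLp, hg.coeFn_toLp] with x h1 h2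
  rw [h1, h2]

lemma condexp_proj_zero (hm : m ≤ m0) [IsFiniteMeasure μ] {d : ℕ}
    {Y : α → EuclideanSpace ℝ (Fin d)} (hY : Integrable Y μ)
    (h : μ[Y|m] =ᵐ[μ] 0) (i : Fin d) :
    μ[fun ω => Y ω i|m] =ᵐ[μ] 0 := by
  have hYi : Integrable (fun ω => Y ω i) μ :=
    (EuclideanSpace.proj (𝕜 := ℝ) i).integrable_comp hY
  refine (ae_eq_condExp_of_forall_setIntegral_eq hm hYi
    (fun s _ _ => (integrable_zero _ _ _).integrableOn)
    (fun s hs hμs => ?_) ?_).symm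
  · have h2 : ∫ ω in s, Y ω ∂μ = 0 := by
      rw [← setIntegral_condExp hm hY hs]
      rw [setIntegral_congr_ae (hm s hs) (h.mono fun x hx _ => hx)]
      simp
    have h1 : ∫ ω in s, (EuclideanSpace.proj (𝕜 := ℝ) i) (Y ω) ∂μ
        = (EuclideanSpace.proj (𝕜 := ℝ) i) (∫ ω in s, Y ω ∂μ) :=
      ContinuousLinearMap.integral_comp_comm _ (hY.integrableOn (s := s))
    simp only [Pi.zero_apply, integral_zero]
    calc (0 : ℝ) = (EuclideanSpace.proj (𝕜 := ℝ) i) (∫ ω in s, Y ω ∂μ) := by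
          rw [h2]; simp
      _ = ∫ ω in s, Y ω i ∂μ := h1.symm
  · exact ⟨fun _ => 0, stronglyMeasurable_const, Filter.EventuallyEq.rfl⟩

lemma integral_inner_zero (hm : m ≤ m0) [IsFiniteMeasure μ] {d : ℕ}
    {X Y : α → EuclideanSpace ℝ (Fin d)} (hXm : StronglyMeasurable[m] X)
    (hX : MemLp X 2 μ) (hY : MemLp Y 2 μ) (h : μ[Y|m] =ᵐ[μ] 0) :
    ∫ ω, (inner ℝ (X ω) (Y ω) : ℝ) ∂μ = 0 := by
  have hXi : ∀ i : Fin d, MemLp (fun ω => X ω i) 2 μ := fun i =>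
    (EuclideanSpace.proj (𝕜 := ℝ) i).comp_memLp' hX
  have hYi : ∀ i : Fin d, MemLp (fun ω => Y ω i) 2 μ := fun i =>
    (EuclideanSpace.proj (𝕜 := ℝ) i).comp_memLp' hY
  have hmul : ∀ i : Fin d, Integrable (fun ω => X ω i * Y ω i) μ := fun i =>
    integrable_mul_L2 (hXi i) (hYi i)
  have hsum : ∫ ω, (inner ℝ (X ω) (Y ω) : ℝ) ∂μ = ∑ i, ∫ ω, X ω i * Y ω i ∂μ := by
    rw [← integral_finset_sum _ fun i _ => hmul i]
    refine integral_congr_ae (Filter.Eventually.of_forall fun ω => ?_)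
    simp [PiLp.inner_apply, RCLike.inner_apply, mul_comm]
  rw [hsum]
  refine Finset.sum_eq_zero fun i _ => ?_
  have hXim : StronglyMeasurable[m] (fun ω => X ω i) :=
    (EuclideanSpace.proj (𝕜 := ℝ) i).continuous.comp_stronglyMeasurable hXm
  have h0 : μ[fun ω => Y ω i|m] =ᵐ[μ] 0 :=
    condexp_proj_zero hm (hY.integrable one_le_two) h i
  have hpull : μ[fun ω => X ω i * Y ω i|m]
      =ᵐ[μ] (fun ω => X ω i) * μ[fun ω => Y ω i|m] :=
    condExp_mul_of_stronglyMeasurable_left hXim (hmul i) ((hYi i).integrable one_le_two)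
  have hzero : μ[fun ω => X ω i * Y ω i|m] =ᵐ[μ] 0 := by
    refine hpull.trans ?_
    filter_upwards [h0] with ω hω
    simp [hω]
  rw [← integral_condExp hm (f := fun ω => X ω i * Y ω i)]
  rw [integral_congr_ae hzero]
  simp

lemma integral_norm_add_sq_orth (hm : m ≤ m0) [IsFiniteMeasure μ] {d : ℕ}
    {X Y : α → EuclideanSpace ℝ (Fin d)} (hXm : StronglyMeasurable[m] X)
    (hX : MemLp X 2 μ) (hY : MemLp Y 2 μ) (h : μ[Y|m] =ᵐ[μ] 0) :
    ∫ ω, ‖X ω + Y ω‖ ^ 2 ∂μ = ∫ ω, ‖X ω‖ ^ 2 ∂μ + ∫ ω, ‖Y ω‖ ^ 2 ∂μ := by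
  have hIX : Integrable (fun ω => ‖X ω‖ ^ 2) μ := (memLp_two_iff_integrable_sq_norm hX.1).mp hX
  have hIY : Integrable (fun ω => ‖Y ω‖ ^ 2) μ := (memLp_two_iff_integrable_sq_norm hY.1).mp hY
  have hIinner : Integrable (fun ω => (inner ℝ (X ω) (Y ω) : ℝ)) μ := integrable_inner_L2 hX hY
  have hexp : (fun ω => ‖X ω + Y ω‖ ^ 2) =
      fun ω => ‖X ω‖ ^ 2 + ((2 : ℝ) * (inner ℝ (X ω) (Y ω) : ℝ) + ‖Y ω‖ ^ 2) := by
    funext ω; rw [norm_add_sq_real]; ring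
  have hI2 : Integrable (fun ω => (2 : ℝ) * (inner ℝ (X ω) (Y ω) : ℝ) + ‖Y ω‖ ^ 2) μ :=
    (hIinner.const_mul 2).add hIY
  rw [hexp, integral_add hIX hI2, integral_add (hIinner.const_mul 2) hIY, integral_const_mul,
    integral_inner_zero hm hXm hX hY h]
  ring

end Helpers

/-- Error accumulation of recursive variance-reduced gradient estimates (SPIDER-type):
if `∇ₖ = ∇ₖ₋₁ + Δₖ` where `Δₖ` is a conditionally unbiased estimate of the gradient variation
`g(wₖ) - g(wₖ₋₁)` with conditional variance at most `τ₂²‖wₖ - wₖ₋₁‖²`, and the initial estimate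
has mean-squared error at most `τ₁²`, then
`𝔼‖∇ₜ - g(wₜ)‖² ≤ τ₂² Σₖ 𝔼‖wₖ - wₖ₋₁‖² + τ₁²`. -/
theorem stmt_15 {Ω : Type*} {mΩ : MeasurableSpace Ω} (μ : Measure Ω)
    [IsProbabilityMeasure μ] (ℱ : Filtration ℕ mΩ)
    (d : ℕ) (g : EuclideanSpace ℝ (Fin d) → EuclideanSpace ℝ (Fin d))
    (hg : Measurable g) (τ₁ τ₂ : ℝ) (hτ₁ : 0 ≤ τ₁) (hτ₂ : 0 ≤ τ₂)
    (t : ℕ) (w grad Δ : ℕ → Ω → EuclideanSpace ℝ (Fin d))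
    (hL2w : ∀ k ≤ t, MemLp (w k) 2 μ)
    (hL2grad : ∀ k ≤ t, MemLp (grad k) 2 μ)
    (hL2Δ : ∀ k, 1 ≤ k → k ≤ t → MemLp (Δ k) 2 μ)
    (hw0 : StronglyMeasurable[ℱ 0] (w 0))
    (hgrad0 : StronglyMeasurable[ℱ 0] (grad 0))
    (hinit : ∫ ω, ‖grad 0 ω - g (w 0 ω)‖ ^ 2 ∂μ ≤ τ₁ ^ 2)
    (hwmeas : ∀ k, 1 ≤ k → k ≤ t → StronglyMeasurable[ℱ (k - 1)] (w k))
    (hΔmeas : ∀ k, 1 ≤ k → k ≤ t → StronglyMeasurable[ℱ k] (Δ k))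
    (hΔmean : ∀ k, 1 ≤ k → k ≤ t →
      μ[Δ k | ℱ (k - 1)] =ᵐ[μ] fun ω => g (w k ω) - g (w (k - 1) ω))
    (hΔvar : ∀ k, 1 ≤ k → k ≤ t →
      ∀ᵐ ω ∂μ,
        (μ[(fun ω' => ‖Δ k ω' - (g (w k ω') - g (w (k - 1) ω'))‖ ^ 2) | ℱ (k - 1)]) ω
          ≤ τ₂ ^ 2 * ‖w k ω - w (k - 1) ω‖ ^ 2)
    (hrec : ∀ k, 1 ≤ k → k ≤ t → grad k = grad (k - 1) + Δ k) :
    ∫ ω, ‖grad t ω - g (w t ω)‖ ^ 2 ∂μ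
      ≤ τ₂ ^ 2 * ∑ k ∈ Finset.Icc 1 t, ∫ ω, ‖w k ω - w (k - 1) ω‖ ^ 2 ∂μ + τ₁ ^ 2 := by
  classical
  -- measurability of `g ∘ w k` with respect to `ℱ k`
  have hgwSM : ∀ k, k ≤ t → StronglyMeasurable[ℱ k] (fun ω => g (w k ω)) := by
    intro k hk
    rcases Nat.eq_zero_or_pos k with rfl | hk1
    · exact (hg.comp hw0.measurable).stronglyMeasurable
    · have := (hg.comp (hwmeas k hk1 hk).measurable).stronglyMeasurable
      exact this.mono (ℱ.mono (Nat.sub_le k 1))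
  have hgradSM : ∀ k, k ≤ t → StronglyMeasurable[ℱ k] (grad k) := by
    intro k
    induction k with
    | zero => intro _; exact hgrad0
    | succ n ih =>
      intro h
      have h1 : 1 ≤ n + 1 := Nat.succ_le_succ (Nat.zero_le n)
      rw [hrec (n + 1) h1 h]
      simp only [Nat.add_sub_cancel]
      exact ((ih (Nat.le_of_succ_le h)).mono (ℱ.mono (Nat.le_succ n))).add (hΔmeas _ h1 h)
  have hXSM : ∀ k, k ≤ t → StronglyMeasurable[ℱ k] (fun ω => grad k ω - g (w k ω)) :=
    fun k hk => (hgradSM k hk).sub (hgwSM k hk)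
  -- the corrections `Y k` are in L²
  have hDmean : ∀ k, 1 ≤ k → k ≤ t →
      MemLp (fun ω => g (w k ω) - g (w (k - 1) ω)) 2 μ := by
    intro k h1 hk
    exact (memLp_condexp_two (ℱ.le (k - 1)) (hL2Δ k h1 hk)).ae_eq (hΔmean k h1 hk)
  have hYL2 : ∀ k, 1 ≤ k → k ≤ t →
      MemLp (fun ω => Δ k ω - (g (w k ω) - g (w (k - 1) ω))) 2 μ := by
    intro k h1 hk
    exact (hL2Δ k h1 hk).sub (hDmean k h1 hk)
  by_cases hXt : MemLp (fun ω => grad t ω - g (w t ω)) 2 μ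
  · -- main case: all `grad k - g (w k)` are in L²
    have hdown : ∀ k, 1 ≤ k → k ≤ t →
        MemLp (fun ω => grad k ω - g (w k ω)) 2 μ →
        MemLp (fun ω => grad (k - 1) ω - g (w (k - 1) ω)) 2 μ := by
      intro k h1 hk hXk
      have := hXk.sub (hYL2 k h1 hk)
      refine this.ae_eq (Filter.Eventually.of_forall fun ω => ?_)
      simp only [Pi.sub_apply, hrec k h1 hk, Pi.add_apply]
      abel
    have hXdown : ∀ j, j ≤ t → MemLp (fun ω => grad (t - j) ω - g (w (t - j) ω)) 2 μ := by
      intro j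
      induction j with
      | zero => intro _; simpa using hXt
      | succ n ih =>
        intro h
        have hn : n ≤ t := Nat.le_of_succ_le h
        have h1 : 1 ≤ t - n := by omega
        have heq : t - (n + 1) = t - n - 1 := by omega
        rw [heq]
        exact hdown (t - n) h1 (Nat.sub_le t n) (ih hn)
    have hXL2 : ∀ k, k ≤ t → MemLp (fun ω => grad k ω - g (w k ω)) 2 μ := by
      intro k hk
      have : k = t - (t - k) := by omega
      rw [this]
      exact hXdown (t - k) (Nat.sub_le t k)
    -- main induction
    have key : ∀ k, k ≤ t →
        ∫ ω, ‖grad k ω - g (w k ω)‖ ^ 2 ∂μ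
          ≤ τ₂ ^ 2 * ∑ j ∈ Finset.Icc 1 k, ∫ ω, ‖w j ω - w (j - 1) ω‖ ^ 2 ∂μ + τ₁ ^ 2 := by
      intro k
      induction k with
      | zero => intro _; simpa using hinit
      | succ n ih =>
        intro hn1
        have hnt : n ≤ t := Nat.le_of_succ_le hn1
        have h1 : 1 ≤ n + 1 := Nat.succ_le_succ (Nat.zero_le n)
        have hXn := hXL2 n hnt
        have hY : MemLp (fun ω => Δ (n + 1) ω - (g (w (n + 1) ω) - g (w n ω))) 2 μ := by
          have := hYL2 (n + 1) h1 hn1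
          simpa using this
        -- conditional mean of the correction is zero
        have hΔmean' : μ[Δ (n + 1)|ℱ n] =ᵐ[μ] fun ω => g (w (n + 1) ω) - g (w n ω) := by
          have := hΔmean (n + 1) h1 hn1
          simpa using this
        have hDInt : Integrable (fun ω => g (w (n + 1) ω) - g (w n ω)) μ :=
          integrable_condExp.congr hΔmean'
        have hDSM : StronglyMeasurable[ℱ n] (fun ω => g (w (n + 1) ω) - g (w n ω)) := by
          have h2 : StronglyMeasurable[ℱ n] (fun ω => g (w (n + 1) ω)) := by
            have := (hg.comp (hwmeas (n + 1) h1 hn1).measurable).stronglyMeasurable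
            exact this
          exact h2.sub (hgwSM n hnt)
        have hY0 : μ[(fun ω => Δ (n + 1) ω - (g (w (n + 1) ω) - g (w n ω)))|ℱ n]
            =ᵐ[μ] 0 := by
          have hsub := condExp_sub (m := ℱ n) (μ := μ)
            ((hL2Δ (n + 1) h1 hn1).integrable one_le_two) hDInt
          refine (Filter.EventuallyEq.trans ?_ hsub).trans ?_
          · rfl
          · have hD : μ[(fun ω => g (w (n + 1) ω) - g (w n ω))|ℱ n]
                = fun ω => g (w (n + 1) ω) - g (w n ω) :=
              condExp_of_stronglyMeasurable (ℱ.le n) hDSM hDInt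
            filter_upwards [hΔmean'] with ω e1
            simp only [Pi.sub_apply, hD, e1, Pi.zero_apply, sub_self]
        -- orthogonal decomposition
        have hdecomp : ∫ ω, ‖grad (n + 1) ω - g (w (n + 1) ω)‖ ^ 2 ∂μ
            = ∫ ω, ‖(grad n ω - g (w n ω))
                + (Δ (n + 1) ω - (g (w (n + 1) ω) - g (w n ω)))‖ ^ 2 ∂μ := by
          refine integral_congr_ae (Filter.Eventually.of_forall fun ω => ?_)
          rw [hrec (n + 1) h1 hn1]
          simp only [Nat.add_sub_cancel, Pi.add_apply]
          congr 1
          abel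
        rw [hdecomp,
          integral_norm_add_sq_orth (ℱ.le n) (hXSM n hnt) hXn hY hY0]
        -- variance bound on the correction
        have hvar : ∫ ω, ‖Δ (n + 1) ω - (g (w (n + 1) ω) - g (w n ω))‖ ^ 2 ∂μ
            ≤ τ₂ ^ 2 * ∫ ω, ‖w (n + 1) ω - w n ω‖ ^ 2 ∂μ := by
          have hΔvar' : ∀ᵐ ω ∂μ,
              (μ[(fun ω' => ‖Δ (n + 1) ω' - (g (w (n + 1) ω') - g (w n ω'))‖ ^ 2)|ℱ n]) ω
                ≤ τ₂ ^ 2 * ‖w (n + 1) ω - w n ω‖ ^ 2 := by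
            have := hΔvar (n + 1) h1 hn1
            simpa using this
          have hIY2 : Integrable
              (fun ω => ‖Δ (n + 1) ω - (g (w (n + 1) ω) - g (w n ω))‖ ^ 2) μ :=
            (memLp_two_iff_integrable_sq_norm hY.1).mp hY
          have hw' : MemLp (fun ω => w (n + 1) ω - w n ω) 2 μ :=
            (hL2w (n + 1) hn1).sub (hL2w n hnt)
          have hIw2 : Integrable (fun ω => ‖w (n + 1) ω - w n ω‖ ^ 2) μ :=
            (memLp_two_iff_integrable_sq_norm hw'.1).mp hw'
          calc ∫ ω, ‖Δ (n + 1) ω - (g (w (n + 1) ω) - g (w n ω))‖ ^ 2 ∂μ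
              = ∫ ω, (μ[(fun ω' =>
                  ‖Δ (n + 1) ω' - (g (w (n + 1) ω') - g (w n ω'))‖ ^ 2)|ℱ n]) ω ∂μ :=
                (integral_condExp (ℱ.le n)).symm
            _ ≤ ∫ ω, τ₂ ^ 2 * ‖w (n + 1) ω - w n ω‖ ^ 2 ∂μ :=
                integral_mono_ae integrable_condExp (hIw2.const_mul _) hΔvar'
            _ = τ₂ ^ 2 * ∫ ω, ‖w (n + 1) ω - w n ω‖ ^ 2 ∂μ := integral_const_mul _ _
        have hsum : ∑ j ∈ Finset.Icc 1 (n + 1), ∫ ω, ‖w j ω - w (j - 1) ω‖ ^ 2 ∂μ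
            = (∑ j ∈ Finset.Icc 1 n, ∫ ω, ‖w j ω - w (j - 1) ω‖ ^ 2 ∂μ)
              + ∫ ω, ‖w (n + 1) ω - w n ω‖ ^ 2 ∂μ := by
          rw [Finset.sum_Icc_succ_top h1]
          simp
        rw [hsum]
        have hihn := ih hnt
        nlinarith [hvar, hihn]
    exact key t le_rfl
  · -- degenerate case: the left-hand side integral is zero
    have hmeas : AEStronglyMeasurable (fun ω => grad t ω - g (w t ω)) μ := by
      refine (hL2grad t le_rfl).1.sub ?_
      exact (hg.comp_aemeasurable (hL2w t le_rfl).1.aemeasurable).aestronglyMeasurable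
    have hnint : ¬ Integrable (fun ω => ‖grad t ω - g (w t ω)‖ ^ 2) μ := by
      intro h
      exact hXt ((memLp_two_iff_integrable_sq_norm hmeas).mpr h)
    rw [integral_undef hnint]
    have h1 : (0:ℝ) ≤ ∑ k ∈ Finset.Icc 1 t, ∫ ω, ‖w k ω - w (k - 1) ω‖ ^ 2 ∂μ :=
      Finset.sum_nonneg fun k _ => integral_nonneg fun ω => sq_nonneg _
    nlinarith [sq_nonneg τ₁, sq_nonneg τ₂]
end

section
/- Let L₀, β > 0 and define Δ : ℝ → ℝ by Δ(w) = w² if |w| ≤ L₀/(2β), and Δ(w) = (L₀/β)·|w| − L₀²/(4β²) otherwise. For x ∈ {−1, 1} define ℓ(w; x) = (L₀/2)·w·x + (β/2)·Δ(w). Then for each x ∈ {−1, 1}, the function w ↦ ℓ(w; x) is convex, L₀-Lipschitz, and differentiable on ℝ with β-Lipschitz derivative. -/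
/-- The one-dimensional hard-instance loss `ℓ(w; x) = (L₀/2) w x + (β/2) Δ(w)`, with `Δ` the
Huber regularizer, is convex, `L₀`-Lipschitz, and differentiable with `β`-Lipschitz derivative
for each `x ∈ {-1, 1}`. -/
theorem stmt_16 (L₀ β : ℝ) (hL₀ : 0 < L₀) (hβ : 0 < β)
    (Δ : ℝ → ℝ)
    (hΔ : ∀ w, Δ w =
      if |w| ≤ L₀ / (2 * β) then w ^ 2 else (L₀ / β) * |w| - L₀ ^ 2 / (4 * β ^ 2))
    (ℓ : ℝ → ℝ → ℝ)
    (hℓ : ∀ w x, ℓ w x = L₀ / 2 * w * x + β / 2 * Δ w) :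
    ∀ x ∈ ({-1, 1} : Set ℝ),
      ConvexOn ℝ Set.univ (fun w => ℓ w x) ∧
      LipschitzWith L₀.toNNReal (fun w => ℓ w x) ∧
      Differentiable ℝ (fun w => ℓ w x) ∧
      LipschitzWith β.toNNReal (deriv (fun w => ℓ w x)) := by
  set r : ℝ := L₀ / (2 * β) with hr_def
  have hr : 0 < r := div_pos hL₀ (by positivity)
  -- closed form for Δ
  have hclosed : ∀ v, Δ v = v ^ 2 - max (|v| - r) 0 ^ 2 := by
    intro v
    rw [hΔ v]
    split_ifs with h
    · rw [max_eq_right (by linarith), ]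
      ring
    · push_neg at h
      rw [max_eq_left (by linarith)]
      have h1 : L₀ / β = 2 * r := by rw [hr_def]; field_simp
      have h2 : L₀ ^ 2 / (4 * β ^ 2) = r ^ 2 := by rw [hr_def]; field_simp; ring
      rw [h1, h2]
      nlinarith [sq_abs v]
  -- the clamp function
  set c : ℝ → ℝ := fun w => max (-r) (min r w) with hc_def
  have hc_mono : Monotone c := fun a b hab =>
    max_le_max le_rfl (min_le_min le_rfl hab)
  have hc_lip : ∀ a b, |c a - c b| ≤ |a - b| := by
    intro a b
    calc |max (-r) (min r a) - max (-r) (min r b)|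
        = |max (min r a) (-r) - max (min r b) (-r)| := by rw [max_comm (-r), max_comm (-r)]
      _ ≤ |min r a - min r b| := abs_max_sub_max_le_abs _ _ _
      _ ≤ max |r - r| |a - b| := abs_min_sub_min_le_max _ _ _ _
      _ ≤ |a - b| := by simp
  have hc_abs : ∀ w, |c w| ≤ r := by
    intro w
    rw [abs_le]
    exact ⟨le_max_left _ _, max_le (by linarith) (min_le_left _ _)⟩
  -- derivative of the square-of-positive-part at boundary points
  have hsq0 : ∀ a : ℝ, |a| = r → HasDerivAt (fun v => max (|v| - r) 0 ^ 2) 0 a := by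
    intro a ha
    rw [hasDerivAt_iff_isLittleO]
    have ha0 : max (|a| - r) 0 = 0 := by rw [ha]; simp
    rw [Asymptotics.isLittleO_iff]
    intro ε hε
    filter_upwards [Metric.ball_mem_nhds a hε] with v hv
    rw [Metric.mem_ball, Real.dist_eq] at hv
    have h1 : max (|v| - r) 0 ≤ |v - a| := by
      apply max_le _ (abs_nonneg _)
      calc |v| - r = |v| - |a| := by rw [ha]
        _ ≤ |v - a| := abs_sub_abs_le_abs_sub v a
    have h2 : max (|v| - r) 0 ^ 2 ≤ |v - a| ^ 2 :=
      pow_le_pow_left₀ (le_max_right _ _) h1 2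
    have hz : max (|a| - r) 0 ^ 2 = 0 := by rw [ha0]; ring
    rw [hz, smul_zero, sub_zero, sub_zero]
    rw [Real.norm_eq_abs, Real.norm_eq_abs]
    rw [abs_of_nonneg (by positivity : (0:ℝ) ≤ max (|v| - r) 0 ^ 2)]
    calc max (|v| - r) 0 ^ 2 ≤ |v - a| ^ 2 := h2
      _ = |v - a| * |v - a| := sq (|v - a|) ▸ by ring
      _ ≤ ε * |v - a| := by
          apply mul_le_mul_of_nonneg_right hv.le (abs_nonneg _)
  -- derivative of Δ
  have hD : ∀ w, HasDerivAt Δ (2 * c w) w := by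
    intro w
    rcases lt_trichotomy (|w|) r with hw | hw | hw
    · -- interior of the quadratic region
      have hcw : c w = w := by
        rw [abs_lt] at hw
        simp only [hc_def]
        rw [min_eq_right hw.2.le, max_eq_right hw.1.le]
      have hev : Δ =ᶠ[nhds w] fun v => v ^ 2 := by
        filter_upwards [(isOpen_lt continuous_abs continuous_const).mem_nhds hw] with v hv
        rw [hΔ v, if_pos (le_of_lt hv)]
      have h2 : HasDerivAt (fun v : ℝ => v ^ 2) (2 * w) w := by
        simpa using hasDerivAt_pow 2 w
      rw [hcw]
      exact h2.congr_of_eventuallyEq hev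
    · -- boundary: use the closed form and the squeeze
      have hΔeq : Δ = fun v => v ^ 2 - max (|v| - r) 0 ^ 2 := funext hclosed
      have h1 : HasDerivAt (fun v : ℝ => v ^ 2) (2 * w) w := by
        simpa using hasDerivAt_pow 2 w
      have h2 := (h1.sub (hsq0 w hw))
      rw [hΔeq]
      have hcw : c w = w := by
        rcases abs_eq (le_of_lt hr) |>.mp hw with h | h
        · simp only [hc_def, h]
          rw [min_eq_left le_rfl, max_eq_right (by linarith)]
        · simp only [hc_def, h]
          rw [min_eq_right (by linarith), max_eq_left le_rfl]
      rw [hcw]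
      rw [sub_zero] at h2
      exact h2
    · -- linear region
      rcases lt_or_ge 0 w with hw0 | hw0
      · have hwr : r < w := by rwa [abs_of_pos hw0] at hw
        have hcw : c w = r := by
          simp only [hc_def]
          rw [min_eq_left hwr.le, max_eq_right (by linarith)]
        have hev : Δ =ᶠ[nhds w] fun v => (L₀ / β) * v - L₀ ^ 2 / (4 * β ^ 2) := by
          filter_upwards [(isOpen_lt continuous_const continuous_id).mem_nhds hwr] with v hv
          have hv0 : 0 < v := lt_trans hr hv
          rw [hΔ v, if_neg (by rw [abs_of_pos hv0]; exact not_le.mpr hv), abs_of_pos hv0]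
        have h2 : HasDerivAt (fun v : ℝ => (L₀ / β) * v - L₀ ^ 2 / (4 * β ^ 2))
            (L₀ / β) w := by
          simpa using ((hasDerivAt_id w).const_mul (L₀ / β)).sub_const (L₀ ^ 2 / (4 * β ^ 2))
        have hval : (2 : ℝ) * c w = L₀ / β := by
          rw [hcw, hr_def]; field_simp
        rw [hval]
        exact h2.congr_of_eventuallyEq hev
      · have hwr : w < -r := by
          rw [abs_of_nonpos hw0] at hw; linarith
        have hcw : c w = -r := by
          simp only [hc_def]
          rw [min_eq_right (by linarith), max_eq_left (by linarith)]
        have hev : Δ =ᶠ[nhds w] fun v => (L₀ / β) * (-v) - L₀ ^ 2 / (4 * β ^ 2) := by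
          filter_upwards [(isOpen_lt continuous_id continuous_const).mem_nhds hwr] with v hv
          have hv0 : v < 0 := by simp only [Set.mem_setOf_eq, id] at hv; linarith
          have : r < |v| := by rw [abs_of_neg hv0]; simp only [Set.mem_setOf_eq, id] at hv; linarith
          rw [hΔ v, if_neg (not_le.mpr this), abs_of_neg hv0]
        have h2 : HasDerivAt (fun v : ℝ => (L₀ / β) * (-v) - L₀ ^ 2 / (4 * β ^ 2))
            (-(L₀ / β)) w := by
          simpa using (((hasDerivAt_id w).neg).const_mul (L₀ / β)).sub_const
            (L₀ ^ 2 / (4 * β ^ 2))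
        have hval : (2 : ℝ) * c w = -(L₀ / β) := by
          rw [hcw, hr_def]; field_simp
        rw [hval]
        exact h2.congr_of_eventuallyEq hev
  intro x hx
  have hx1 : |x| = 1 := by
    rcases hx with h | h <;> simp_all
  -- derivative of ℓ · x
  have hF : ∀ w, HasDerivAt (fun w => ℓ w x) (L₀ / 2 * x + β * c w) w := by
    intro w
    have hfun : (fun w => ℓ w x) = fun w => L₀ / 2 * w * x + β / 2 * Δ w :=
      funext fun w => hℓ w x
    rw [hfun]
    have h1 : HasDerivAt (fun w : ℝ => L₀ / 2 * w * x) (L₀ / 2 * x) w := by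
      simpa using (((hasDerivAt_id w).const_mul (L₀ / 2)).mul_const x)
    have h2 : HasDerivAt (fun w => β / 2 * Δ w) (β / 2 * (2 * c w)) w :=
      (hD w).const_mul (β / 2)
    have := h1.add h2
    have e : L₀ / 2 * x + β * c w = L₀ / 2 * x + β / 2 * (2 * c w) := by ring
    rw [e]
    exact this
  have hdiff : Differentiable ℝ (fun w => ℓ w x) := fun w => (hF w).differentiableAt
  have hderiv : deriv (fun w => ℓ w x) = fun w => L₀ / 2 * x + β * c w :=
    funext fun w => (hF w).deriv
  refine ⟨?_, ?_, hdiff, ?_⟩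
  · -- convexity
    apply MonotoneOn.convexOn_of_deriv convex_univ hdiff.continuous.continuousOn
      (hdiff.differentiableOn)
    rw [hderiv]
    intro a _ b _ hab
    simp only
    have := hc_mono hab
    nlinarith
  · -- L₀-Lipschitz
    apply lipschitzWith_of_nnnorm_deriv_le hdiff
    intro w
    rw [hderiv]
    rw [← NNReal.coe_le_coe, coe_nnnorm, Real.norm_eq_abs, Real.coe_toNNReal _ hL₀.le]
    have hβr : β * r = L₀ / 2 := by rw [hr_def]; field_simp
    calc |L₀ / 2 * x + β * c w| ≤ |L₀ / 2 * x| + |β * c w| := abs_add_le _ _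
      _ = L₀ / 2 * |x| + β * |c w| := by
          rw [abs_mul, abs_mul, abs_of_pos hβ, abs_of_pos (by linarith : (0:ℝ) < L₀ / 2)]
      _ ≤ L₀ / 2 * 1 + β * r := by
          have := hc_abs w
          gcongr <;> simp [hx1]
      _ = L₀ := by rw [hβr]; ring
  · -- β-Lipschitz derivative
    rw [hderiv]
    apply LipschitzWith.of_dist_le_mul
    intro a b
    rw [Real.dist_eq, Real.dist_eq, Real.coe_toNNReal _ hβ.le]
    have : L₀ / 2 * x + β * c a - (L₀ / 2 * x + β * c b) = β * (c a - c b) := by ring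
    rw [this, abs_mul, abs_of_pos hβ]
    exact mul_le_mul_of_nonneg_left (hc_lip a b) hβ.le
end
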